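/- Let R_1, …, R_{n+1} be exchangeable real-valued random variables with P(R_i = R_j) = 0 for all i ≠ j. Then the rank K = #{i ∈ {1,…,n+1} : R_i ≤ R_{n+1}} is uniformly distributed on {1, …, n+1}, i.e., P(K = j) = 1/(n+1) for every j ∈ {1,…,n+1}. -/

import Mathlib

open MeasureTheory Filter Set
open scoped Classical

noncomputable def rkA {n : ℕ} (i : Fin (n + 1)) (x : Fin (n + 1) → ℝ) : ℕ :=
  (Finset.univ.filter (fun k => x k ≤ x i)).card

lemma rkA_measurable {n : ℕ} (i : Fin (n + 1)) : Measurable (rkA i) := by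
  have : rkA i = fun x => ∑ k : Fin (n+1), if x k ≤ x i then 1 else 0 := by
    funext x; rw [rkA, Finset.card_filter]
  rw [this]
  exact Finset.measurable_sum _ fun k _ =>
    Measurable.ite (measurableSet_le (measurable_pi_apply k) (measurable_pi_apply i))
      measurable_const measurable_const

lemma rkA_comp {n : ℕ} (σ : Equiv.Perm (Fin (n + 1))) (i : Fin (n + 1)) (x : Fin (n + 1) → ℝ) :
    rkA i (fun k => x (σ k)) = rkA (σ i) x := by
  simp only [rkA, Finset.card_filter]
  exact Fintype.sum_equiv σ _ _ (fun k => by simp)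

lemma rkA_mem {n : ℕ} (i : Fin (n + 1)) (x : Fin (n + 1) → ℝ) :
    rkA i x ∈ Finset.Icc 1 (n + 1) := by
  simp only [Finset.mem_Icc]
  constructor
  · exact Finset.card_pos.2 ⟨i, by simp⟩
  · simpa [rkA] using (Finset.card_filter_le Finset.univ (fun k => x k ≤ x i))

lemma rkA_inj {n : ℕ} {x : Fin (n + 1) → ℝ} (hx : ∀ a b : Fin (n+1), a ≠ b → x a ≠ x b) :
    Function.Injective (fun i => rkA i x) := by
  have key : ∀ a b : Fin (n+1), x a < x b → rkA a x < rkA b x := by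
    intro a b hab
    apply Finset.card_lt_card
    constructor
    · intro k hk
      simp only [Finset.mem_filter] at *
      exact ⟨hk.1, hk.2.trans hab.le⟩
    · intro hsub
      have hb : b ∈ Finset.univ.filter (fun k => x k ≤ x b) := by simp
      have := hsub hb
      simp only [Finset.mem_filter] at this
      exact absurd this.2 (not_le.2 hab)
  intro a b hab
  by_contra hne
  rcases lt_trichotomy (x a) (x b) with h | h | h
  · exact absurd hab (key a b h).ne
  · exact hx a b hne h
  · exact absurd hab.symm (key b a h).ne

lemma rkA_surj {n : ℕ} {x : Fin (n + 1) → ℝ} (hx : ∀ a b : Fin (n+1), a ≠ b → x a ≠ x b)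
    {j : ℕ} (h1 : 1 ≤ j) (h2 : j ≤ n + 1) : ∃ i, rkA i x = j := by
  have hinj := rkA_inj hx
  have himg : Finset.univ.image (fun i => rkA i x) = Finset.Icc 1 (n+1) := by
    apply Finset.eq_of_subset_of_card_le
    · intro y hy
      simp only [Finset.mem_image] at hy
      obtain ⟨i, _, rfl⟩ := hy
      exact rkA_mem i x
    · rw [Nat.card_Icc, Finset.card_image_of_injective _ hinj]
      simp
  have : j ∈ Finset.univ.image (fun i => rkA i x) := by
    rw [himg]; simp [Finset.mem_Icc, h1, h2]
  simpa using this

/-- A finite family of random elements is exchangeable if its joint distribution is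
invariant under permutations of the indices. -/
def Exchangeable {Ω E : Type*} [MeasurableSpace Ω] [MeasurableSpace E]
    (μ : Measure Ω) {k : ℕ} (V : Fin k → Ω → E) : Prop :=
  ∀ σ : Equiv.Perm (Fin k),
    Measure.map (fun ω (i : Fin k) => V (σ i) ω) μ =
      Measure.map (fun ω (i : Fin k) => V i ω) μ

/-- For exchangeable, almost-surely tie-free scores `R_1, …, R_{n+1}`,
the rank `K = #{i : R_i ≤ R_{n+1}}` is uniform on `{1, …, n+1}`. -/
theorem conformal_rank_uniform
    {Ω : Type*} [MeasurableSpace Ω] (μ : Measure Ω) [IsProbabilityMeasure μ]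
    (n : ℕ)
    (R : Fin (n + 1) → Ω → ℝ)
    (hRmeas : ∀ i, Measurable (R i))
    (hexch : Exchangeable μ R)
    (hties : ∀ i j : Fin (n + 1), i ≠ j → μ {ω | R i ω = R j ω} = 0)
    (K : Ω → ℕ)
    (hK : ∀ ω, K ω = Nat.card {i : Fin (n + 1) // R i ω ≤ R (Fin.last n) ω}) :
    ∀ j : ℕ, 1 ≤ j → j ≤ n + 1 →
      μ {ω | K ω = j} = ((n : ENNReal) + 1)⁻¹ := by
  intro j hj1 hj2
  set F : Ω → (Fin (n + 1) → ℝ) := fun ω i => R i ω with hF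
  have hFmeas : Measurable F := measurable_pi_lambda _ hRmeas
  set ν : Measure (Fin (n + 1) → ℝ) := Measure.map F μ with hν
  have hνprob : IsProbabilityMeasure ν := Measure.isProbabilityMeasure_map hFmeas.aemeasurable
  -- level sets
  set S : Fin (n + 1) → Set (Fin (n + 1) → ℝ) := fun i => {x | rkA i x = j} with hS
  have hSmeas : ∀ i, MeasurableSet (S i) := fun i =>
    (rkA_measurable i) (measurableSet_singleton j)
  -- K in terms of rkA
  have hKrk : ∀ ω, K ω = rkA (Fin.last n) (F ω) := by
    intro ω
    rw [hK ω, Nat.card_eq_fintype_card, Fintype.card_subtype]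
    rfl
  -- step A: transport to ν
  have stepA : μ {ω | K ω = j} = ν (S (Fin.last n)) := by
    rw [hν, Measure.map_apply hFmeas (hSmeas _)]
    congr 1
    ext ω
    simp [hKrk ω, hS, Set.preimage, Set.mem_setOf_eq]
  -- step B: permutation invariance of ν
  have hmap : ∀ σ : Equiv.Perm (Fin (n + 1)),
      Measure.map (fun x (k : Fin (n+1)) => x (σ k)) ν = ν := by
    intro σ
    have hg : Measurable (fun (x : Fin (n+1) → ℝ) (k : Fin (n+1)) => x (σ k)) :=
      measurable_pi_lambda _ fun k => measurable_pi_apply (σ k)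
    rw [hν, Measure.map_map hg hFmeas]
    exact hexch σ
  have stepB : ∀ i, ν (S i) = ν (S (Fin.last n)) := by
    intro i
    set σ : Equiv.Perm (Fin (n+1)) := Equiv.swap (Fin.last n) i with hσ
    have hg : Measurable (fun (x : Fin (n+1) → ℝ) (k : Fin (n+1)) => x (σ k)) :=
      measurable_pi_lambda _ fun k => measurable_pi_apply (σ k)
    have := congrArg (fun m => m (S (Fin.last n))) (hmap σ)
    rw [Measure.map_apply hg (hSmeas _)] at this
    have hpre : (fun (x : Fin (n+1) → ℝ) (k : Fin (n+1)) => x (σ k)) ⁻¹' (S (Fin.last n))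
        = S i := by
      ext x
      simp only [Set.mem_preimage, hS, Set.mem_setOf_eq, rkA_comp σ (Fin.last n) x]
      rw [hσ, Equiv.swap_apply_left]
    rw [hpre] at this
    exact this
  -- tie-free set
  set T : Set (Fin (n + 1) → ℝ) := {x | ∀ a b : Fin (n+1), a ≠ b → x a ≠ x b} with hT
  have hTmeas : MeasurableSet T := by
    have : T = ⋂ (a : Fin (n+1)) (b : Fin (n+1)) (_ : a ≠ b), {x | x a = x b}ᶜ := by
      ext x; simp [hT, Set.mem_setOf_eq]
    rw [this]
    refine MeasurableSet.iInter fun a => MeasurableSet.iInter fun b =>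
      MeasurableSet.iInter fun _ => ?_
    exact (measurableSet_eq_fun (measurable_pi_apply a) (measurable_pi_apply b)).compl
  have hTc : ν Tᶜ = 0 := by
    have hsub : Tᶜ ⊆ ⋃ (a : Fin (n+1)) (b : Fin (n+1)) (_ : a ≠ b), {x | x a = x b} := by
      intro x hx
      simp only [hT, Set.mem_compl_iff, Set.mem_setOf_eq, not_forall] at hx
      obtain ⟨a, b, hab, hx⟩ := hx
      simp only [Set.mem_iUnion]
      exact ⟨a, b, hab, not_not.mp hx⟩
    refine measure_mono_null hsub ?_
    refine measure_iUnion_null fun a => measure_iUnion_null fun b => measure_iUnion_null fun hab => ?_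
    rw [hν, Measure.map_apply hFmeas
      (measurableSet_eq_fun (measurable_pi_apply a) (measurable_pi_apply b))]
    have : F ⁻¹' {x | x a = x b} = {ω | R a ω = R b ω} := rfl
    rw [this]
    exact hties a b hab
  -- partition
  have hdisj : Pairwise (Function.onFun Disjoint (fun i => S i ∩ T)) := by
    intro a b hab
    refine Set.disjoint_left.2 fun x hxa hxb => ?_
    exact hab (rkA_inj hxa.2 (hxa.1.trans hxb.1.symm))
  have hcover : (⋃ i, S i ∩ T) = T := by
    ext x
    simp only [Set.mem_iUnion, Set.mem_inter_iff]
    constructor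
    · rintro ⟨i, _, hxT⟩; exact hxT
    · intro hxT
      obtain ⟨i, hi⟩ := rkA_surj hxT hj1 hj2
      exact ⟨i, hi, hxT⟩
  have hsum : ∑ i : Fin (n+1), ν (S i ∩ T) = 1 := by
    rw [← tsum_fintype (L := SummationFilter.unconditional _), ← measure_iUnion hdisj (fun i => (hSmeas i).inter hTmeas), hcover]
    ·
      have : ν T = 1 := by
        have := measure_add_measure_compl (μ := ν) hTmeas
        rw [hTc, add_zero] at this
        simpa using this
      exact this
  have hST : ∀ i, ν (S i ∩ T) = ν (S i) := by
    intro i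
    have h1 : ν (S i) ≤ ν (S i ∩ T) + ν (S i ∩ Tᶜ) := by
      calc ν (S i) = ν ((S i ∩ T) ∪ (S i ∩ Tᶜ)) := by
              rw [← Set.inter_union_distrib_left, Set.union_compl_self, Set.inter_univ]
        _ ≤ ν (S i ∩ T) + ν (S i ∩ Tᶜ) := measure_union_le _ _
    have h2 : ν (S i ∩ Tᶜ) = 0 := measure_mono_null Set.inter_subset_right hTc
    rw [h2, add_zero] at h1
    exact le_antisymm (measure_mono Set.inter_subset_left) h1
  have hfinal : (n + 1 : ENNReal) * ν (S (Fin.last n)) = 1 := by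
    calc (n + 1 : ENNReal) * ν (S (Fin.last n))
        = ∑ _i : Fin (n+1), ν (S (Fin.last n)) := by
          simp [Finset.sum_const, Finset.card_univ, mul_comm]
      _ = ∑ i : Fin (n+1), ν (S i ∩ T) := by
          refine Finset.sum_congr rfl fun i _ => ?_
          rw [hST i, stepB i]
      _ = 1 := hsum
  rw [stepA]
  have hne : (n + 1 : ENNReal) ≠ 0 := by simp
  have hnt : (n + 1 : ENNReal) ≠ ⊤ := by simp
  have := congrArg (fun z => (n + 1 : ENNReal)⁻¹ * z) hfinal
  simp only [← mul_assoc, ENNReal.inv_mul_cancel hne hnt, one_mul, mul_one] at this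
  exact this
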